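/- Let G be a locally compact, Hausdorff, second-countable ample étale groupoid with compact unit space G⁰, and let n ∈ ℕ. Then G has the n-filling property (for every collection U₁, …, Uₙ ⊆ G⁰ of nonempty open sets there exist compact open bisections E₁, …, Eₙ with ⋃ⱼ r(E_jU_j) = G⁰) if and only if G is n-filling in Suzuki's sense (for every nonempty open W ⊆ G⁰ there exist open bisections E₁, …, Eₙ with ⋃ᵢ r(EᵢW) = G⁰). -/

import Mathlib

open Set

/-- A (locally compact, Hausdorff, second-countable) étale groupoid structure on a
topological space `G`.  Multiplication is formalized as a total function whose groupoid
axioms are only imposed on composable pairs (those `(α, β)` with `s α = r β`). -/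
structure EtaleGroupoid (G : Type*) [TopologicalSpace G] where
  unitSpace : Set G
  r : G → G
  s : G → G
  mul : G → G → G
  inv : G → G
  r_mem : ∀ α, r α ∈ unitSpace
  s_mem : ∀ α, s α ∈ unitSpace
  r_unit : ∀ u ∈ unitSpace, r u = u
  s_unit : ∀ u ∈ unitSpace, s u = u
  r_mul : ∀ α β, s α = r β → r (mul α β) = r α
  s_mul : ∀ α β, s α = r β → s (mul α β) = s β
  mul_assoc' : ∀ α β γ, s α = r β → s β = r γ → mul (mul α β) γ = mul α (mul β γ)
  unit_mul : ∀ α, mul (r α) α = α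
  mul_unit : ∀ α, mul α (s α) = α
  r_inv : ∀ α, r (inv α) = s α
  s_inv : ∀ α, s (inv α) = r α
  mul_inv : ∀ α, mul α (inv α) = r α
  inv_mul : ∀ α, mul (inv α) α = s α
  /-- multiplication is continuous on the set of composable pairs -/
  continuousOn_mul : ContinuousOn (fun p : G × G => mul p.1 p.2) {p : G × G | s p.1 = r p.2}
  continuous_inv : Continuous inv
  /-- étale: the range map is a local homeomorphism onto the unit space -/
  isLocalHomeomorph_r : IsLocalHomeomorph fun α => (⟨r α, r_mem α⟩ : unitSpace)
  /-- étale: the source map is a local homeomorphism onto the unit space -/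
  isLocalHomeomorph_s : IsLocalHomeomorph fun α => (⟨s α, s_mem α⟩ : unitSpace)

namespace EtaleGroupoid

variable {G : Type*} [TopologicalSpace G] (𝒢 : EtaleGroupoid G)

/-- A bisection: a set on which both `r` and `s` are injective. -/
def IsBisection (E : Set G) : Prop := Set.InjOn 𝒢.r E ∧ Set.InjOn 𝒢.s E

def IsOpenBisection (E : Set G) : Prop := IsOpen E ∧ 𝒢.IsBisection E

def IsCompactOpenBisection (E : Set G) : Prop := IsCompact E ∧ IsOpen E ∧ 𝒢.IsBisection E

/-- `U` is an open subset of the unit space `G⁰` (in the subspace topology). -/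
def IsUnitOpen (U : Set G) : Prop :=
  U ⊆ 𝒢.unitSpace ∧ ∃ V : Set G, IsOpen V ∧ U = V ∩ 𝒢.unitSpace

/-- `U_E = r(EU) = {r α : α ∈ E, s α ∈ U}`. -/
def ranOn (E U : Set G) : Set G := 𝒢.r '' {α ∈ E | 𝒢.s α ∈ U}

/-- `G` is minimal if every orbit `r(Gu)` is dense in the unit space. -/
def Minimal : Prop :=
  ∀ u ∈ 𝒢.unitSpace, 𝒢.unitSpace ⊆ closure (𝒢.r '' {α | 𝒢.s α = u})

/-- `G` is ample if its topology has a basis of compact open bisections. -/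
def Ample : Prop := ∀ (α : G) (V : Set G), IsOpen V → α ∈ V →
  ∃ E : Set G, 𝒢.IsCompactOpenBisection E ∧ α ∈ E ∧ E ⊆ V

end EtaleGroupoid
namespace EtaleGroupoid

variable {G : Type*} [TopologicalSpace G] (𝒢 : EtaleGroupoid G)

/-- `G` has the `n`-filling property: for all nonempty open `U₁, …, Uₙ ⊆ G⁰` there are
compact open bisections `E₁, …, Eₙ` with `⋃ⱼ r(EⱼUⱼ) = G⁰`. -/
def NFilling (n : ℕ) : Prop :=
  ∀ U : Fin n → Set G, (∀ j, 𝒢.IsUnitOpen (U j) ∧ (U j).Nonempty) →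
    ∃ E : Fin n → Set G, (∀ j, 𝒢.IsCompactOpenBisection (E j)) ∧
      (⋃ j, 𝒢.ranOn (E j) (U j)) = 𝒢.unitSpace

/-- `G` is `n`-filling in Suzuki's sense: for every nonempty open `W ⊆ G⁰` there are
open bisections `E₁, …, Eₙ` with `⋃ᵢ r(EᵢW) = G⁰`. -/
def SuzukiNFilling (n : ℕ) : Prop :=
  ∀ W : Set G, 𝒢.IsUnitOpen W → W.Nonempty →
    ∃ E : Fin n → Set G, (∀ j, 𝒢.IsOpenBisection (E j)) ∧
      (⋃ j, 𝒢.ranOn (E j) W) = 𝒢.unitSpace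

end EtaleGroupoid
namespace EtaleGroupoid

variable {G : Type*} [TopologicalSpace G] (𝒢 : EtaleGroupoid G)

/-- The source map as a map into the unit space. -/
def s' (α : G) : 𝒢.unitSpace := ⟨𝒢.s α, 𝒢.s_mem α⟩

lemma continuous_s' : Continuous 𝒢.s' := 𝒢.isLocalHomeomorph_s.continuous

lemma continuous_r' : Continuous (fun α => (⟨𝒢.r α, 𝒢.r_mem α⟩ : 𝒢.unitSpace)) :=
  𝒢.isLocalHomeomorph_r.continuous

lemma continuous_s : Continuous 𝒢.s := continuous_subtype_val.comp 𝒢.continuous_s'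

lemma continuous_r : Continuous 𝒢.r := continuous_subtype_val.comp 𝒢.continuous_r'

lemma inv_inv (α : G) : 𝒢.inv (𝒢.inv α) = α := by
  have h1 : 𝒢.mul (𝒢.inv α) (𝒢.inv (𝒢.inv α)) = 𝒢.s α := by rw [𝒢.mul_inv, 𝒢.r_inv]
  have hrx : 𝒢.r (𝒢.inv (𝒢.inv α)) = 𝒢.r α := by rw [𝒢.r_inv, 𝒢.s_inv]
  calc 𝒢.inv (𝒢.inv α)
      = 𝒢.mul (𝒢.r (𝒢.inv (𝒢.inv α))) (𝒢.inv (𝒢.inv α)) := (𝒢.unit_mul _).symm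
    _ = 𝒢.mul (𝒢.mul α (𝒢.inv α)) (𝒢.inv (𝒢.inv α)) := by rw [hrx, 𝒢.mul_inv]
    _ = 𝒢.mul α (𝒢.mul (𝒢.inv α) (𝒢.inv (𝒢.inv α))) :=
        𝒢.mul_assoc' α (𝒢.inv α) (𝒢.inv (𝒢.inv α)) (𝒢.r_inv α).symm (by rw [𝒢.s_inv, hrx])
    _ = 𝒢.mul α (𝒢.s α) := by rw [h1]
    _ = α := 𝒢.mul_unit α

lemma mem_inv_image {F : Set G} {x : G} : x ∈ 𝒢.inv '' F ↔ 𝒢.inv x ∈ F := by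
  constructor
  · rintro ⟨β, hβ, rfl⟩; rwa [𝒢.inv_inv]
  · intro h; exact ⟨𝒢.inv x, h, 𝒢.inv_inv x⟩

lemma inv_image_eq_preimage (F : Set G) : 𝒢.inv '' F = 𝒢.inv ⁻¹' F := by
  ext x; exact 𝒢.mem_inv_image

/-- The image of an open set under `s` is open in the unit space. -/
lemma isUnitOpen_s_image {D : Set G} (hD : IsOpen D) : 𝒢.IsUnitOpen (𝒢.s '' D) := by
  have hopen : IsOpen (𝒢.s' '' D) := 𝒢.isLocalHomeomorph_s.isOpenMap D hD
  rw [isOpen_induced_iff] at hopen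
  obtain ⟨V, hV, hVeq⟩ := hopen
  refine ⟨by rintro x ⟨α, _, rfl⟩; exact 𝒢.s_mem α, V, hV, ?_⟩
  have : 𝒢.s '' D = Subtype.val '' (𝒢.s' '' D) := by
    rw [Set.image_image]; rfl
  rw [this, ← hVeq, Subtype.image_preimage_coe, Set.inter_comm]

lemma isUnitOpen_r_image {D : Set G} (hD : IsOpen D) : 𝒢.IsUnitOpen (𝒢.r '' D) := by
  have hopen : IsOpen ((fun α => (⟨𝒢.r α, 𝒢.r_mem α⟩ : 𝒢.unitSpace)) '' D) :=
    𝒢.isLocalHomeomorph_r.isOpenMap D hD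
  rw [isOpen_induced_iff] at hopen
  obtain ⟨V, hV, hVeq⟩ := hopen
  refine ⟨by rintro x ⟨α, _, rfl⟩; exact 𝒢.r_mem α, V, hV, ?_⟩
  have : 𝒢.r '' D = Subtype.val '' ((fun α => (⟨𝒢.r α, 𝒢.r_mem α⟩ : 𝒢.unitSpace)) '' D) := by
    rw [Set.image_image]
  rw [this, ← hVeq, Subtype.image_preimage_coe, Set.inter_comm]

/-- The product of two subsets of the groupoid. -/
def prodSet (A B : Set G) : Set G :=
  (fun p : G × G => 𝒢.mul p.1 p.2) '' ((A ×ˢ B) ∩ {p | 𝒢.s p.1 = 𝒢.r p.2})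

lemma mem_prodSet {A B : Set G} {x : G} :
    x ∈ 𝒢.prodSet A B ↔ ∃ α β, α ∈ A ∧ β ∈ B ∧ 𝒢.s α = 𝒢.r β ∧ x = 𝒢.mul α β := by
  constructor
  · rintro ⟨⟨α, β⟩, ⟨⟨hα, hβ⟩, hc⟩, rfl⟩; exact ⟨α, β, hα, hβ, hc, rfl⟩
  · rintro ⟨α, β, hα, hβ, hc, rfl⟩; exact ⟨⟨α, β⟩, ⟨⟨hα, hβ⟩, hc⟩, rfl⟩

lemma prodSet_isCompact [T2Space G] {A B : Set G} (hA : IsCompact A) (hB : IsCompact B) :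
    IsCompact (𝒢.prodSet A B) := by
  have hcl : IsClosed {p : G × G | 𝒢.s p.1 = 𝒢.r p.2} :=
    isClosed_eq (𝒢.continuous_s.comp continuous_fst) (𝒢.continuous_r.comp continuous_snd)
  have hC : IsCompact ((A ×ˢ B) ∩ {p : G × G | 𝒢.s p.1 = 𝒢.r p.2}) :=
    (hA.prod hB).inter_right hcl
  exact hC.image_of_continuousOn (𝒢.continuousOn_mul.mono Set.inter_subset_right)

lemma prodSet_isBisection {A B : Set G} (hA : 𝒢.IsBisection A) (hB : 𝒢.IsBisection B) :
    𝒢.IsBisection (𝒢.prodSet A B) := by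
  constructor
  · rintro x₁ hx₁ x₂ hx₂ hr
    rw [𝒢.mem_prodSet] at hx₁ hx₂
    obtain ⟨α₁, β₁, hα₁, hβ₁, hc₁, rfl⟩ := hx₁
    obtain ⟨α₂, β₂, hα₂, hβ₂, hc₂, rfl⟩ := hx₂
    rw [𝒢.r_mul _ _ hc₁, 𝒢.r_mul _ _ hc₂] at hr
    have hαeq : α₁ = α₂ := hA.1 hα₁ hα₂ hr
    have hβeq : β₁ = β₂ := hB.1 hβ₁ hβ₂ (by rw [← hc₁, ← hc₂, hαeq])
    rw [hαeq, hβeq]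
  · rintro x₁ hx₁ x₂ hx₂ hs
    rw [𝒢.mem_prodSet] at hx₁ hx₂
    obtain ⟨α₁, β₁, hα₁, hβ₁, hc₁, rfl⟩ := hx₁
    obtain ⟨α₂, β₂, hα₂, hβ₂, hc₂, rfl⟩ := hx₂
    rw [𝒢.s_mul _ _ hc₁, 𝒢.s_mul _ _ hc₂] at hs
    have hβeq : β₁ = β₂ := hB.2 hβ₁ hβ₂ hs
    have hαeq : α₁ = α₂ := hA.2 hα₁ hα₂ (by rw [hc₁, hc₂, hβeq])
    rw [hαeq, hβeq]

lemma prodSet_isOpen {A B : Set G} (hA : IsOpen A) (hB : IsOpen B) :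
    IsOpen (𝒢.prodSet A B) := by
  rw [isOpen_iff_forall_mem_open]
  intro x hx
  rw [𝒢.mem_prodSet] at hx
  obtain ⟨α₀, β₀, hα₀, hβ₀, hc₀, rfl⟩ := hx
  obtain ⟨e, heβ, hes⟩ := 𝒢.isLocalHomeomorph_s β₀
  have hs'e : ∀ γ, 𝒢.s' γ = e γ := fun γ => congrFun hes γ
  set V : Set G := e.source ∩ B with hV
  have hVopen : IsOpen V := e.open_source.inter hB
  have hβ₀V : β₀ ∈ V := ⟨heβ, hβ₀⟩
  have hTopen : IsOpen (e '' V) := e.isOpen_image_of_subset_source hVopen Set.inter_subset_left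
  set O : Set G := 𝒢.s' ⁻¹' (e '' V) with hO
  have hOopen : IsOpen O := hTopen.preimage 𝒢.continuous_s'
  -- the canonical section: for η ∈ O, β η ∈ V and s (β η) = s η
  have key : ∀ η ∈ O, e.symm (𝒢.s' η) ∈ V ∧ 𝒢.s (e.symm (𝒢.s' η)) = 𝒢.s η := by
    intro η hη
    obtain ⟨v, hvV, hve⟩ := hη
    have hvsrc : v ∈ e.source := hvV.1
    have h1 : e.symm (𝒢.s' η) = v := by rw [← hve, e.left_inv hvsrc]
    refine ⟨h1 ▸ hvV, ?_⟩
    have : 𝒢.s' (e.symm (𝒢.s' η)) = 𝒢.s' η := by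
      rw [h1, ← hve, hs'e v]
    exact congrArg Subtype.val this
  set g : G → G := fun η => 𝒢.mul η (𝒢.inv (e.symm (𝒢.s' η))) with hg
  have hmaps : ∀ η ∈ O, 𝒢.s η = 𝒢.r (𝒢.inv (e.symm (𝒢.s' η))) := by
    intro η hη; rw [𝒢.r_inv]; exact ((key η hη).2).symm
  have hgc : ContinuousOn g O := by
    have h1 : ContinuousOn (fun η => e.symm (𝒢.s' η)) O := by
      apply e.continuousOn_symm.comp 𝒢.continuous_s'.continuousOn
      intro η hη
      obtain ⟨v, hvV, hve⟩ := hη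
      rw [← hve]; exact e.map_source hvV.1
    have h2 : ContinuousOn (fun η => (η, 𝒢.inv (e.symm (𝒢.s' η)))) O :=
      continuousOn_id.prodMk (𝒢.continuous_inv.comp_continuousOn h1)
    exact 𝒢.continuousOn_mul.comp h2 (fun η hη => hmaps η hη)
  refine ⟨O ∩ g ⁻¹' A, ?_, ?_, ?_, ?_⟩
  · -- N ⊆ prodSet A B
    rintro η ⟨hηO, hηA⟩
    obtain ⟨hβV, hβs⟩ := key η hηO
    rw [𝒢.mem_prodSet]
    refine ⟨g η, e.symm (𝒢.s' η), hηA, hβV.2, ?_, ?_⟩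
    · show 𝒢.s (𝒢.mul η (𝒢.inv (e.symm (𝒢.s' η)))) = _
      rw [𝒢.s_mul _ _ (hmaps η hηO), 𝒢.s_inv]
    · show η = 𝒢.mul (𝒢.mul η (𝒢.inv (e.symm (𝒢.s' η)))) (e.symm (𝒢.s' η))
      rw [𝒢.mul_assoc' _ _ _ (hmaps η hηO) (by rw [𝒢.s_inv]), 𝒢.inv_mul, hβs,
        𝒢.mul_unit]
  · exact hgc.isOpen_inter_preimage hOopen hA
  · -- x₀ ∈ O
    have hsx : 𝒢.s' (𝒢.mul α₀ β₀) = 𝒢.s' β₀ := by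
      apply Subtype.ext; exact 𝒢.s_mul _ _ hc₀
    show 𝒢.s' (𝒢.mul α₀ β₀) ∈ e '' V
    rw [hsx, hs'e β₀]
    exact Set.mem_image_of_mem e hβ₀V
  · -- g x₀ ∈ A
    show g (𝒢.mul α₀ β₀) ∈ A
    have hsx : 𝒢.s' (𝒢.mul α₀ β₀) = 𝒢.s' β₀ := by
      apply Subtype.ext; exact 𝒢.s_mul _ _ hc₀
    have hβx : e.symm (𝒢.s' (𝒢.mul α₀ β₀)) = β₀ := by
      rw [hsx, hs'e β₀, e.left_inv heβ]
    rw [hg]; simp only [hβx]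
    rw [𝒢.mul_assoc' _ _ _ hc₀ (by rw [𝒢.r_inv]), 𝒢.mul_inv, ← hc₀, 𝒢.mul_unit]
    exact hα₀

lemma inv_image_isCompactOpenBisection {F : Set G} (hF : 𝒢.IsCompactOpenBisection F) :
    𝒢.IsCompactOpenBisection (𝒢.inv '' F) := by
  refine ⟨hF.1.image 𝒢.continuous_inv, ?_, ?_, ?_⟩
  · rw [𝒢.inv_image_eq_preimage]; exact hF.2.1.preimage 𝒢.continuous_inv
  · rintro x₁ ⟨β₁, hβ₁, rfl⟩ x₂ ⟨β₂, hβ₂, rfl⟩ hr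
    rw [𝒢.r_inv, 𝒢.r_inv] at hr
    rw [hF.2.2.2 hβ₁ hβ₂ hr]
  · rintro x₁ ⟨β₁, hβ₁, rfl⟩ x₂ ⟨β₂, hβ₂, rfl⟩ hs
    rw [𝒢.s_inv, 𝒢.s_inv] at hs
    rw [hF.2.2.1 hβ₁ hβ₂ hs]

end EtaleGroupoid
namespace EtaleGroupoid

variable {G : Type*} [TopologicalSpace G] (𝒢 : EtaleGroupoid G)

lemma arrow {n : ℕ} (hs : 𝒢.SuzukiNFilling n) {A : Set G} (hA : 𝒢.IsUnitOpen A)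
    (hAne : A.Nonempty) {u : G} (hu : u ∈ 𝒢.unitSpace) :
    ∃ α, 𝒢.s α ∈ A ∧ 𝒢.r α = u := by
  obtain ⟨E, _, hcov⟩ := hs A hA hAne
  rw [← hcov] at hu
  simp only [Set.mem_iUnion, ranOn, Set.mem_image, Set.mem_setOf_eq] at hu
  obtain ⟨j, α, ⟨_, hsα⟩, hru⟩ := hu
  exact ⟨α, hsα, hru⟩

lemma step (hample : 𝒢.Ample) {n : ℕ} (hs : 𝒢.SuzukiNFilling n)
    {W U : Set G} (hW : 𝒢.IsUnitOpen W) (hWne : W.Nonempty)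
    (hU : 𝒢.IsUnitOpen U) (hUne : U.Nonempty) :
    ∃ W' F : Set G, 𝒢.IsUnitOpen W' ∧ W'.Nonempty ∧ W' ⊆ W ∧
      𝒢.IsCompactOpenBisection F ∧ W' ⊆ 𝒢.s '' F ∧ 𝒢.r '' F ⊆ U := by
  obtain ⟨u₀, hu₀⟩ := hUne
  obtain ⟨α, hαs, hαr⟩ := 𝒢.arrow hs hW hWne (hU.1 hu₀)
  obtain ⟨VW, hVW, hWeq⟩ := hW.2
  obtain ⟨VU, hVU, hUeq⟩ := hU.2
  have hαmem : α ∈ 𝒢.r ⁻¹' VU ∩ 𝒢.s ⁻¹' VW := by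
    constructor
    · show 𝒢.r α ∈ VU
      rw [hαr]; exact (hUeq ▸ hu₀).1
    · exact (hWeq ▸ hαs).1
  obtain ⟨F, hF, hαF, hFsub⟩ := hample α _
    ((hVU.preimage 𝒢.continuous_r).inter (hVW.preimage 𝒢.continuous_s)) hαmem
  refine ⟨𝒢.s '' F, F, 𝒢.isUnitOpen_s_image hF.2.1, ⟨𝒢.s α, ⟨α, hαF, rfl⟩⟩, ?_, hF,
    subset_rfl, ?_⟩
  · rintro x ⟨β, hβ, rfl⟩
    rw [hWeq]; exact ⟨(hFsub hβ).2, 𝒢.s_mem β⟩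
  · rintro x ⟨β, hβ, rfl⟩
    rw [hUeq]; exact ⟨(hFsub hβ).1, 𝒢.r_mem β⟩

lemma chain (hample : 𝒢.Ample) {n : ℕ} (hs : 𝒢.SuzukiNFilling n)
    (hne : 𝒢.unitSpace.Nonempty) (U : Fin n → Set G)
    (hU : ∀ j, 𝒢.IsUnitOpen (U j) ∧ (U j).Nonempty) :
    ∃ W : Set G, 𝒢.IsUnitOpen W ∧ W.Nonempty ∧
      ∀ j, ∃ F, 𝒢.IsCompactOpenBisection F ∧ W ⊆ 𝒢.s '' F ∧ 𝒢.r '' F ⊆ U j := by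
  suffices h : ∀ k : ℕ, k ≤ n → ∃ W : Set G, 𝒢.IsUnitOpen W ∧ W.Nonempty ∧
      ∀ j : Fin n, (j : ℕ) < k →
        ∃ F, 𝒢.IsCompactOpenBisection F ∧ W ⊆ 𝒢.s '' F ∧ 𝒢.r '' F ⊆ U j by
    obtain ⟨W, h1, h2, h3⟩ := h n le_rfl
    exact ⟨W, h1, h2, fun j => h3 j j.isLt⟩
  intro k
  induction k with
  | zero =>
    exact fun _ => ⟨𝒢.unitSpace,
      ⟨subset_rfl, Set.univ, isOpen_univ, (Set.univ_inter _).symm⟩, hne,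
      fun j hj => absurd hj (Nat.not_lt_zero _)⟩
  | succ k ih =>
    intro hk
    obtain ⟨W, hWopen, hWne, hWF⟩ := ih (Nat.le_of_succ_le hk)
    have hkn : k < n := hk
    obtain ⟨W', F, hW'open, hW'ne, hW'sub, hFbis, hW'F, hFr⟩ :=
      𝒢.step hample hs hWopen hWne (hU ⟨k, hkn⟩).1 (hU ⟨k, hkn⟩).2
    refine ⟨W', hW'open, hW'ne, fun j hj => ?_⟩
    rcases Nat.lt_succ_iff_lt_or_eq.mp hj with h | h
    · obtain ⟨F₀, h1, h2, h3⟩ := hWF j h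
      exact ⟨F₀, h1, hW'sub.trans h2, h3⟩
    · have hjk : j = ⟨k, hkn⟩ := Fin.ext h
      exact hjk ▸ ⟨F, hFbis, hW'F, hFr⟩

end EtaleGroupoid

/-- **Statement 16.** For an ample étale groupoid `G` with compact unit space and
`n ∈ ℕ`, `G` has the `n`-filling property if and only if `G` is `n`-filling in
Suzuki's sense. -/
theorem nFilling_iff_suzuki {G : Type*} [TopologicalSpace G]
    [LocallyCompactSpace G] [T2Space G] [SecondCountableTopology G]
    (𝒢 : EtaleGroupoid G) (hample : 𝒢.Ample) (hcompact : IsCompact 𝒢.unitSpace)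
    (n : ℕ) :
    𝒢.NFilling n ↔ 𝒢.SuzukiNFilling n := by
  constructor
  · intro hnf W hW hWne
    obtain ⟨E, hE, hcov⟩ := hnf (fun _ => W) (fun _ => ⟨hW, hWne⟩)
    exact ⟨E, fun j => ⟨(hE j).2.1, (hE j).2.2⟩, hcov⟩
  · intro hs U hU
    by_cases hne : 𝒢.unitSpace.Nonempty
    swap
    · rw [Set.not_nonempty_iff_eq_empty] at hne
      refine ⟨fun _ => ∅, fun j => ⟨isCompact_empty, isOpen_empty,
        Set.injOn_empty _, Set.injOn_empty _⟩, ?_⟩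
      simp [EtaleGroupoid.ranOn, hne]
    obtain ⟨W, hWopen, hWne, hWF⟩ := 𝒢.chain hample hs hne U hU
    choose F hFbis hWsub hFr using hWF
    obtain ⟨VW, hVWopen, hWeq⟩ := hWopen.2
    obtain ⟨E, hEbis, hcov⟩ := hs W hWopen hWne
    have hpt : ∀ u : 𝒢.unitSpace, ∃ (j : Fin n) (K V : Set G),
        𝒢.IsCompactOpenBisection K ∧ K ⊆ E j ∧ IsOpen V ∧ (u : G) ∈ V ∧
        V ∩ 𝒢.unitSpace ⊆ 𝒢.ranOn K W := by
      rintro ⟨u, hu⟩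
      have hu' : u ∈ ⋃ j, 𝒢.ranOn (E j) W := hcov ▸ hu
      simp only [Set.mem_iUnion, EtaleGroupoid.ranOn, Set.mem_image,
        Set.mem_setOf_eq] at hu'
      obtain ⟨j, α, ⟨hαE, hαs⟩, hαr⟩ := hu'
      have hαmem : α ∈ E j ∩ 𝒢.s ⁻¹' VW := ⟨hαE, (hWeq ▸ hαs).1⟩
      obtain ⟨K, hK, hαK, hKsub⟩ := hample α _
        ((hEbis j).1.inter (hVWopen.preimage 𝒢.continuous_s)) hαmem
      have hset : {γ ∈ K | 𝒢.s γ ∈ W} = K := Set.ext fun γ =>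
        ⟨fun h => h.1, fun h => ⟨h, hWeq ▸ ⟨(hKsub h).2, 𝒢.s_mem γ⟩⟩⟩
      have hKW : 𝒢.ranOn K W = 𝒢.r '' K := by
        unfold EtaleGroupoid.ranOn
        rw [hset]
      obtain ⟨V, hVopen, hVeq⟩ := (𝒢.isUnitOpen_r_image hK.2.1).2
      refine ⟨j, K, V, hK, fun x hx => (hKsub hx).1, hVopen, ?_, ?_⟩
      · have hmem : u ∈ 𝒢.r '' K := ⟨α, hαK, hαr⟩
        rw [hVeq] at hmem; exact hmem.1
      · rw [hKW, hVeq]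
    choose j K V hK hKE hVopen huV hVsub using hpt
    obtain ⟨t, ht⟩ := hcompact.elim_finite_subcover V hVopen
      (fun x hx => Set.mem_iUnion.mpr ⟨⟨x, hx⟩, huV ⟨x, hx⟩⟩)
    set L : Fin n → Set G := fun i => ⋃ u ∈ {u ∈ (↑t : Set 𝒢.unitSpace) | j u = i}, K u
      with hL
    have hLsub : ∀ i, L i ⊆ E i := by
      intro i
      refine Set.iUnion₂_subset fun u hu => ?_
      rw [← hu.2]; exact hKE u
    have hLbis : ∀ i, 𝒢.IsCompactOpenBisection (L i) := by
      intro i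
      refine ⟨?_, ?_, ?_, ?_⟩
      · exact (t.finite_toSet.subset (Set.sep_subset _ _)).isCompact_biUnion
          (fun u _ => (hK u).1)
      · exact isOpen_biUnion fun u _ => (hK u).2.1
      · exact ((hEbis i).2.1).mono (hLsub i)
      · exact ((hEbis i).2.2).mono (hLsub i)
    refine ⟨fun i => 𝒢.prodSet (L i) (𝒢.inv '' (F i)), fun i => ?_, ?_⟩
    · exact ⟨𝒢.prodSet_isCompact (hLbis i).1 ((𝒢.inv_image_isCompactOpenBisection
          (hFbis i)).1),
        𝒢.prodSet_isOpen (hLbis i).2.1 ((𝒢.inv_image_isCompactOpenBisection (hFbis i)).2.1),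
        𝒢.prodSet_isBisection ⟨(hLbis i).2.2.1, (hLbis i).2.2.2⟩
          (𝒢.inv_image_isCompactOpenBisection (hFbis i)).2.2⟩
    · apply Set.Subset.antisymm
      · refine Set.iUnion_subset fun i => ?_
        rintro x ⟨α, _, rfl⟩
        exact 𝒢.r_mem α
      · intro x hx
        obtain ⟨u, hut, hxV⟩ := Set.mem_iUnion₂.mp (ht hx)
        have hxran : x ∈ 𝒢.ranOn (K u) W := hVsub u ⟨hxV, hx⟩
        obtain ⟨α, ⟨hαK, hαW⟩, hαr⟩ := hxran
        obtain ⟨β, hβF, hβs⟩ := hWsub (j u) hαW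
        have hcmp : 𝒢.s α = 𝒢.r (𝒢.inv β) := by rw [𝒢.r_inv, hβs]
        refine Set.mem_iUnion.mpr ⟨j u, 𝒢.mul α (𝒢.inv β), ⟨?_, ?_⟩, ?_⟩
        · rw [𝒢.mem_prodSet]
          refine ⟨α, 𝒢.inv β, ?_, ⟨β, hβF, rfl⟩, hcmp, rfl⟩
          exact Set.mem_biUnion ⟨hut, rfl⟩ hαK
        · rw [𝒢.s_mul _ _ hcmp, 𝒢.s_inv]
          exact hFr (j u) ⟨β, hβF, rfl⟩
        · rw [𝒢.r_mul _ _ hcmp, hαr]
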